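/- There is a constant K > 0, depending only on q, such that the following holds. Let q ≥ 3 be an integer, let η ∈ (0,1), δ > 0, A > 0, let (C_t)_{t∈ℕ} be reals with 0 < C_t ≤ 1 for all t, and let (x_t)_{t∈ℕ} be defined by some x₀ ∈ (0, A) and x_{t+1} = x_t + η·C_t·x_t^q. Assume there exists t' ∈ ℕ with x_{t'} ≥ A. Then Σ_{t ∈ ℕ, x_t ≤ A} η·C_t ≤ ( (1+δ)^{q−1}/(q−1) + K·(η·A^q/x₀)·(1 + log(A/x₀)/log(1+δ)) ) · x₀^{−(q−1)}. -/

import Mathlib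

lemma tpm_step_bound (q : ℕ) (hq : 3 ≤ q) (δ a b : ℝ) (hδ : 0 < δ) (ha : 0 < a)
    (hab : a ≤ b) (hb : b ≤ (1 + δ) * a) :
    (b - a) / a ^ q ≤ (1 + δ) ^ (q - 1) / ((q : ℝ) - 1) * ((a ^ (q - 1))⁻¹ - (b ^ (q - 1))⁻¹) := by
  set n := q - 1 with hn
  have hq1 : q = n + 1 := by omega
  have hb0 : 0 < b := lt_of_lt_of_le ha hab
  have h1δ : (0:ℝ) < 1 + δ := by linarith
  have hncast : ((q : ℝ) - 1) = (n : ℝ) := by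
    have : (q : ℝ) = (n : ℝ) + 1 := by exact_mod_cast congrArg Nat.cast hq1
    linarith
  have hnpos : (0:ℝ) < (n:ℝ) := by exact_mod_cast (by omega : 0 < n)
  have key1 : (n : ℝ) * a ^ (n - 1) * (b - a) ≤ b ^ n - a ^ n := by
    have := geom_sum₂_mul b a n
    rw [← this]
    have hterm : ∀ i ∈ Finset.range n, a ^ (n - 1) ≤ b ^ i * a ^ (n - 1 - i) := by
      intro i hi
      have hi' : i < n := Finset.mem_range.mp hi
      have h1 : a ^ (n - 1) = a ^ i * a ^ (n - 1 - i) := by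
        rw [← pow_add]; congr 1; omega
      rw [h1]
      gcongr
    have hsum : (n : ℝ) * a ^ (n - 1) ≤ ∑ i ∈ Finset.range n, b ^ i * a ^ (n - 1 - i) := by
      calc (n : ℝ) * a ^ (n - 1) = ∑ _i ∈ Finset.range n, a ^ (n - 1) := by
            rw [Finset.sum_const, Finset.card_range, nsmul_eq_mul]
        _ ≤ _ := Finset.sum_le_sum hterm
    have hba : 0 ≤ b - a := by linarith
    exact mul_le_mul_of_nonneg_right hsum hba
  have key2 : b ^ n ≤ (1 + δ) ^ n * a ^ n := by
    rw [← mul_pow]; gcongr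
  have hD : (a ^ n)⁻¹ - (b ^ n)⁻¹ = (b ^ n - a ^ n) / (a ^ n * b ^ n) :=
    inv_sub_inv (by positivity) (by positivity)
  rw [hD, hncast, div_mul_div_comm]
  rw [div_le_div_iff₀ (by positivity) (by positivity)]
  have hP : (0:ℝ) < (1 + δ) ^ n := by positivity
  have hba : 0 ≤ b - a := by linarith
  have hrel : a ^ q = a ^ (n - 1) * a * a := by
    rw [hq1]; rw [← pow_succ, ← pow_succ]; congr 1; omega
  calc (b - a) * ((n:ℝ) * (a ^ n * b ^ n))
      ≤ (b - a) * ((n:ℝ) * (a ^ n * ((1 + δ) ^ n * a ^ n))) := by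
        gcongr
    _ = (1 + δ) ^ n * ((n:ℝ) * a ^ (n-1) * (b - a)) * a ^ q := by
        rw [hrel]
        have : a ^ n = a ^ (n - 1) * a := by
          rw [← pow_succ]; congr 1; omega
        rw [this]; ring
    _ ≤ (1 + δ) ^ n * (b ^ n - a ^ n) * a ^ q := by
        gcongr

/-- Tensor power method upper bound (Lemma A.1 / `lem:TPM`, upper estimate):
for an increasing sequence `x_{t+1} = x_t + η C_t x_t^q` that eventually exceeds `A`,
the total step mass `Σ_{x_t ≤ A} η C_t` is bounded above. -/
theorem tpm_upper_bound (q : ℕ) (hq : 3 ≤ q) :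
    ∃ K : ℝ, 0 < K ∧
      ∀ (η δ A x₀ : ℝ) (C x : ℕ → ℝ),
        0 < η → η < 1 → 0 < δ → 0 < A →
        (∀ t, 0 < C t) → (∀ t, C t ≤ 1) →
        0 < x₀ → x₀ < A → x 0 = x₀ →
        (∀ t, x (t + 1) = x t + η * C t * x t ^ q) →
        (∃ t', A ≤ x t') →
        (∑' t : ℕ, if x t ≤ A then η * C t else 0) ≤
          ((1 + δ) ^ (q - 1) / ((q : ℝ) - 1)
              + K * (η * A ^ q / x₀) * (1 + Real.log (A / x₀) / Real.log (1 + δ)))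
            * x₀ ^ (-((q : ℤ) - 1)) := by
  classical
  refine ⟨1, one_pos, ?_⟩
  rintro η δ A x₀ C x hη hη1 hδ hA hCpos hCle hx₀ hx₀A hx0 hstep ⟨t', ht'⟩
  have hq1 : (1:ℝ) < (q:ℝ) := by exact_mod_cast (by omega : 1 < q)
  have h1δ : (1:ℝ) < 1 + δ := by linarith
  have hxpos : ∀ t, 0 < x t := by
    intro t; induction t with
    | zero => rw [hx0]; exact hx₀
    | succ k ih =>
        rw [hstep k]
        have : 0 < η * C k * x k ^ q := mul_pos (mul_pos hη (hCpos k)) (pow_pos ih q)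
        linarith
  have hlt : ∀ t, x t < x (t+1) := by
    intro t
    have h1 : 0 < x t := hxpos t
    have : 0 < η * C t * x t ^ q := mul_pos (mul_pos hη (hCpos t)) (pow_pos h1 q)
    rw [hstep t]; linarith
  have hmono : StrictMono x := strictMono_nat_of_lt_succ hlt
  have hEx : ∃ m, A < x m := ⟨t' + 1, lt_of_le_of_lt ht' (hlt t')⟩
  set N := Nat.find hEx with hNdef
  have hNspec : A < x N := Nat.find_spec hEx
  have hNmin : ∀ m, m < N → x m ≤ A := fun m hm => not_lt.mp (Nat.find_min hEx hm)
  have hN0 : N ≠ 0 := by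
    intro h
    rw [h, hx0] at hNspec
    linarith
  obtain ⟨M, hM⟩ : ∃ M, N = M + 1 := ⟨N - 1, by omega⟩
  have hmem : ∀ t, x t ≤ A ↔ t < N := by
    intro t
    constructor
    · intro h; by_contra hc; push_neg at hc
      have : x N ≤ x t := hmono.monotone hc
      linarith
    · exact hNmin t
  have htsum : (∑' t : ℕ, if x t ≤ A then η * C t else 0)
      = ∑ t ∈ Finset.range N, η * C t := by
    rw [tsum_eq_sum (s := Finset.range N) ?_]
    · exact Finset.sum_congr rfl fun t ht =>
        if_pos ((hmem t).mpr (Finset.mem_range.mp ht))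
    · intro t ht
      rw [if_neg]
      intro hc
      exact ht (Finset.mem_range.mpr ((hmem t).mp hc))
  rw [htsum]
  set L := Real.log (A / x₀) / Real.log (1 + δ) with hLdef
  have hlogδ : (0:ℝ) < Real.log (1 + δ) := Real.log_pos h1δ
  have hL0 : 0 ≤ L :=
    div_nonneg (Real.log_nonneg (by rw [le_div_iff₀ hx₀]; linarith)) hlogδ.le
  set c := (1 + δ) ^ (q - 1) / ((q : ℝ) - 1) with hcdef
  have hc0 : 0 ≤ c := div_nonneg (by positivity) (by linarith)
  set g : ℕ → ℝ := fun t => (x t ^ (q - 1))⁻¹ with hgdef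
  set p : ℕ → Prop := fun t => x (t + 1) ≤ (1 + δ) * x t with hpdef
  have hηC : ∀ t, η * C t = (x (t + 1) - x t) / x t ^ q := by
    intro t
    have hx : (x t) ^ q ≠ 0 := (pow_pos (hxpos t) q).ne'
    rw [hstep t]
    field_simp
    ring
  have hganti : ∀ t, g (t + 1) ≤ g t := by
    intro t
    simp only [hgdef]
    apply inv_anti₀ (pow_pos (hxpos t) _)
    gcongr
    · exact (hxpos t).le
    · exact (hlt t).le
  -- small-step bound
  have hS1 : ∑ t ∈ (Finset.range N).filter p, η * C t ≤ c * (x₀ ^ (q - 1))⁻¹ := by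
    calc ∑ t ∈ (Finset.range N).filter p, η * C t
        ≤ ∑ t ∈ (Finset.range N).filter p, c * (g t - g (t + 1)) := by
          apply Finset.sum_le_sum
          intro t ht
          rw [hηC t]
          exact tpm_step_bound q hq δ (x t) (x (t + 1)) hδ (hxpos t) (hlt t).le
            ((Finset.mem_filter.mp ht).2)
      _ ≤ ∑ t ∈ Finset.range N, c * (g t - g (t + 1)) := by
          apply Finset.sum_le_sum_of_subset_of_nonneg (Finset.filter_subset _ _)
          intro t _ _
          have := hganti t
          nlinarith
      _ = c * ∑ t ∈ Finset.range N, (g t - g (t + 1)) := by rw [Finset.mul_sum]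
      _ = c * (g 0 - g N) := by rw [Finset.sum_range_sub' g N]
      _ ≤ c * g 0 := by
          have : (0:ℝ) ≤ g N := inv_nonneg.mpr (pow_pos (hxpos N) _).le
          nlinarith
      _ = c * (x₀ ^ (q - 1))⁻¹ := by rw [hgdef]; simp [hx0]
  -- counting big steps
  have hcount : ∀ m,
      x₀ * (1 + δ) ^ ((Finset.range m).filter (fun t => ¬ p t)).card ≤ x m := by
    intro m
    induction m with
    | zero => simp [hx0]
    | succ k ih =>
        rw [Finset.range_add_one, Finset.filter_insert]
        by_cases hk : p k
        · rw [if_neg (by simpa using hk)]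
          exact le_trans ih (hlt k).le
        · rw [if_pos hk, Finset.card_insert_of_notMem (by simp)]
          have hbig : (1 + δ) * x k < x (k + 1) := not_le.mp hk
          calc x₀ * (1 + δ) ^ (((Finset.range k).filter (fun t => ¬ p t)).card + 1)
              = (x₀ * (1 + δ) ^ ((Finset.range k).filter (fun t => ¬ p t)).card) * (1 + δ) := by
                rw [pow_succ]; ring
            _ ≤ x k * (1 + δ) := by gcongr
            _ ≤ x (k + 1) := by rw [mul_comm]; linarith
  have hcardM : ((((Finset.range M).filter (fun t => ¬ p t)).card : ℝ)) ≤ L := by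
    have h1 := hcount M
    have hxM : x M ≤ A := hNmin M (by omega)
    have h2 : x₀ * (1 + δ) ^ ((Finset.range M).filter (fun t => ¬ p t)).card ≤ A :=
      le_trans h1 hxM
    rw [hLdef, le_div_iff₀ hlogδ]
    have h3 : Real.log (x₀ * (1 + δ) ^ ((Finset.range M).filter (fun t => ¬ p t)).card)
        ≤ Real.log A := Real.log_le_log (by positivity) h2
    rw [Real.log_mul (ne_of_gt hx₀) (by positivity), Real.log_pow] at h3
    rw [Real.log_div (ne_of_gt hA) (ne_of_gt hx₀)]
    push_cast at h3 ⊢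
    linarith
  have hcardN : ((((Finset.range N).filter (fun t => ¬ p t)).card : ℝ)) ≤ L + 1 := by
    have : ((Finset.range N).filter (fun t => ¬ p t)).card
        ≤ ((Finset.range M).filter (fun t => ¬ p t)).card + 1 := by
      rw [hM, Finset.range_add_one, Finset.filter_insert]
      by_cases hMp : p M
      · rw [if_neg (by simpa using hMp)]; omega
      · rw [if_pos hMp]
        exact Finset.card_insert_le _ _
    have h4 : ((((Finset.range N).filter (fun t => ¬ p t)).card : ℝ))
        ≤ (((Finset.range M).filter (fun t => ¬ p t)).card : ℝ) + 1 := by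
      exact_mod_cast this
    linarith
  -- big-step bound
  have hS2 : ∑ t ∈ (Finset.range N).filter (fun t => ¬ p t), η * C t ≤ η * (1 + L) := by
    calc ∑ t ∈ (Finset.range N).filter (fun t => ¬ p t), η * C t
        ≤ ∑ t ∈ (Finset.range N).filter (fun t => ¬ p t), η := by
          apply Finset.sum_le_sum
          intro t _
          nlinarith [hCle t, hCpos t]
      _ = (((Finset.range N).filter (fun t => ¬ p t)).card : ℝ) * η := by
          rw [Finset.sum_const, nsmul_eq_mul]
      _ ≤ (L + 1) * η := by gcongr
      _ = η * (1 + L) := by ring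
  -- final assembly
  have hzpow : x₀ ^ (-((q : ℤ) - 1)) = (x₀ ^ (q - 1))⁻¹ := by
    have h5 : -((q : ℤ) - 1) = -((q - 1 : ℕ) : ℤ) := by
      push_cast [Nat.cast_sub (by omega : 1 ≤ q)]; ring
    rw [h5, zpow_neg, zpow_natCast]
  rw [hzpow]
  have hx0q : x₀ ^ q = x₀ * x₀ ^ (q - 1) := by
    conv_lhs => rw [show q = (q - 1) + 1 from by omega]
    rw [pow_succ]; ring
  have hfin : η * (1 + L) ≤ (η * A ^ q / x₀) * (1 + L) * (x₀ ^ (q - 1))⁻¹ := by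
    have heq : (η * A ^ q / x₀) * (1 + L) * (x₀ ^ (q - 1))⁻¹
        = η * (1 + L) * (A ^ q / x₀ ^ q) := by
      rw [hx0q]
      field_simp
    rw [heq]
    have hAx : (1:ℝ) ≤ A ^ q / x₀ ^ q := by
      rw [le_div_iff₀ (by positivity)]
      have : x₀ ^ q ≤ A ^ q := pow_le_pow_left₀ hx₀.le hx₀A.le q
      linarith
    have hpos : 0 ≤ η * (1 + L) := by positivity
    nlinarith
  calc ∑ t ∈ Finset.range N, η * C t
      = (∑ t ∈ (Finset.range N).filter p, η * C t)
        + ∑ t ∈ (Finset.range N).filter (fun t => ¬ p t), η * C t :=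
        (Finset.sum_filter_add_sum_filter_not _ _ _).symm
    _ ≤ c * (x₀ ^ (q - 1))⁻¹ + (η * A ^ q / x₀) * (1 + L) * (x₀ ^ (q - 1))⁻¹ :=
        add_le_add hS1 (hS2.trans hfin)
    _ = (c + 1 * (η * A ^ q / x₀) * (1 + L)) * (x₀ ^ (q - 1))⁻¹ := by ring
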